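/- Let G be a finite group. Then |Z(G)| divides the Euler characteristic χ(BNC(G)) = ∑_F (-1)^{|F|+1}, where the sum ranges over all nonempty finite sets F of pairwise non-commuting noncentral elements of G. -/

import Mathlib

set_option linter.unusedSectionVars false
attribute [local instance] Classical.propDecidable

open Finset

section Aux

variable {G : Type*} [Group G] [Fintype G]

private noncomputable def act (z : Subgroup.center G) (F : Finset G) : Finset G :=
  F.image (fun x => (z : G) * x)

private lemma act_act (z z' : Subgroup.center G) (F : Finset G) :
    act z (act z' F) = act (z * z') F := by
  classical
  unfold act
  rw [Finset.image_image]
  congr 1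
  funext x
  simp [mul_assoc]

private lemma act_one (F : Finset G) : act (1 : Subgroup.center G) F = F := by
  simp [act]

private lemma mem_act {z : Subgroup.center G} {F : Finset G} {y : G} :
    y ∈ act z F ↔ ∃ x ∈ F, (z : G) * x = y := by
  simp only [act, Finset.mem_image]

private def P (F : Finset G) : Prop :=
  F.Nonempty ∧ (∀ x ∈ F, x ∉ Subgroup.center G) ∧
    ∀ x ∈ F, ∀ y ∈ F, x ≠ y → x * y ≠ y * x

private lemma act_P {z : Subgroup.center G} {F : Finset G} (h : P F) : P (act z F) := by
  obtain ⟨hne, hnc, hcomm⟩ := h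
  refine ⟨hne.image _, ?_, ?_⟩
  · rintro x hx
    obtain ⟨a, ha, rfl⟩ := Finset.mem_image.mp hx
    intro hmem
    exact hnc a ha (by simpa using mul_mem (inv_mem z.2) hmem)
  · rintro x hx y hy hxy heq
    obtain ⟨a, ha, rfl⟩ := Finset.mem_image.mp hx
    obtain ⟨b, hb, rfl⟩ := Finset.mem_image.mp hy
    have hab : a ≠ b := fun h => hxy (by rw [h])
    have hz := z.2
    rw [Subgroup.mem_center_iff] at hz
    apply hcomm a ha b hb hab
    have e1 : (z : G) * a * ((z:G) * b) = (z:G) * (z:G) * (a * b) := by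
      rw [mul_assoc, ← mul_assoc a, hz a, mul_assoc, ← mul_assoc, ← mul_assoc]
    have e2 : (z : G) * b * ((z:G) * a) = (z:G) * (z:G) * (b * a) := by
      rw [mul_assoc, ← mul_assoc b, hz b, mul_assoc, ← mul_assoc, ← mul_assoc]
    rw [e1, e2] at heq
    exact mul_left_cancel heq

private lemma act_free {z : Subgroup.center G} {F : Finset G} (h : P F)
    (hfix : act z F = F) : z = 1 := by
  by_contra hz
  obtain ⟨hne, hnc, hcomm⟩ := h
  obtain ⟨x, hx⟩ := hne
  have hzx : (z : G) * x ∈ F := by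
    rw [← hfix]; exact mem_act.mpr ⟨x, hx, rfl⟩
  have hne' : x ≠ (z : G) * x := by
    intro he
    apply hz
    have h1 : (1 : G) * x = (z : G) * x := by simpa using he
    exact Subtype.ext (mul_right_cancel h1).symm
  apply hcomm x hx ((z:G) * x) hzx hne'
  have hz' := z.2
  rw [Subgroup.mem_center_iff] at hz'
  rw [← mul_assoc, hz' x]

end Aux

/-- The order of the center divides the Euler characteristic of `BNC(G)`,
computed as `∑_F (-1)^(|F|+1)` over all nonempty finite sets `F` of pairwise
non-commuting noncentral elements of `G`. -/
theorem stmt_3 {G : Type*} [Group G] [Fintype G] :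
    (Nat.card (Subgroup.center G) : ℤ) ∣
      ∑ F ∈ Finset.univ.filter (fun F : Finset G =>
          F.Nonempty ∧ (∀ x ∈ F, x ∉ Subgroup.center G) ∧
          ∀ x ∈ F, ∀ y ∈ F, x ≠ y → x * y ≠ y * x),
        (-1 : ℤ) ^ (F.card + 1) := by
  classical
  set R : Setoid (Finset G) :=
    ⟨fun F F' => ∃ z : Subgroup.center G, act z F = F', by
      constructor
      · intro F; exact ⟨1, act_one F⟩
      · rintro F F' ⟨z, rfl⟩; exact ⟨z⁻¹, by rw [act_act, inv_mul_cancel, act_one]⟩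
      · rintro F F' F'' ⟨z, rfl⟩ ⟨z', rfl⟩
        exact ⟨z' * z, (act_act z' z F).symm⟩⟩ with hR
  set s : Finset (Finset G) := Finset.univ.filter (fun F : Finset G =>
          F.Nonempty ∧ (∀ x ∈ F, x ∉ Subgroup.center G) ∧
          ∀ x ∈ F, ∀ y ∈ F, x ≠ y → x * y ≠ y * x) with hs
  have hmem : ∀ F, F ∈ s ↔ P F := by
    intro F; rw [hs]; simp [P]
  set f : Finset G → ℤ := fun F => (-1 : ℤ) ^ (F.card + 1) with hf
  set q : Finset G → Quotient R := Quotient.mk R with hq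
  rw [← Finset.sum_fiberwise_of_maps_to (g := q) (t := s.image q)
    (fun x hx => Finset.mem_image_of_mem q hx) f]
  apply Finset.dvd_sum
  intro b hb
  obtain ⟨F, hF, rfl⟩ := Finset.mem_image.mp hb
  have hPF : P F := (hmem F).mp hF
  have hfiber : s.filter (fun y => q y = q F) =
      Finset.image (fun z : Subgroup.center G => act z F) Finset.univ := by
    ext y
    simp only [Finset.mem_filter, Finset.mem_image, Finset.mem_univ, true_and]
    constructor
    · rintro ⟨hy, hqy⟩
      have : R.r F y := R.symm (Quotient.exact hqy)
      obtain ⟨z, hz⟩ := this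
      exact ⟨z, hz⟩
    · rintro ⟨z, rfl⟩
      refine ⟨(hmem _).mpr (act_P hPF), Quotient.sound ?_⟩
      exact ⟨z⁻¹, by rw [act_act, inv_mul_cancel, act_one]⟩
  rw [hfiber, Finset.sum_image]
  · have hconst : ∀ z : Subgroup.center G, f (act z F) = f F := by
      intro z
      have : (act z F).card = F.card :=
        Finset.card_image_of_injective _ (mul_right_injective (z : G))
      simp [hf, this]
    rw [Finset.sum_congr rfl (fun z _ => hconst z), Finset.sum_const]
    simp only [Finset.card_univ, nsmul_eq_mul]
    rw [Nat.card_eq_fintype_card]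
    exact Dvd.intro _ rfl
  · intro z _ z' _ he
    have : act (z'⁻¹ * z) F = F := by rw [← act_act, (show act z F = act z' F from he), act_act, inv_mul_cancel, act_one]
    have h1 := act_free hPF this
    rwa [inv_mul_eq_one, eq_comm] at h1
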